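/- Let a, b be complex numbers such that (a+b+1/2) + m ≠ 0 and (2a+2b) + m ≠ 0 for every natural number m. Then for every natural number k, ∑_{j=0}^{k} [(a)_j (b)_j / ((a+b+1/2)_j · j!)] · [(a)_{k−j} (b)_{k−j} / ((a+b+1/2)_{k−j} · (k−j)!)] = (2a)_k (2b)_k (a+b)_k / ((a+b+1/2)_k (2a+2b)_k · k!). (This is Clausen's formula ₂F₁(a,b; a+b+1/2; x)² = ₃F₂(2a, 2b, a+b; a+b+1/2, 2a+2b; x) stated at the level of power-series coefficients via the Cauchy product.) -/

import Mathlib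

/-- Rising factorial (Pochhammer symbol) `(z)_n` over the complex numbers. -/
noncomputable def poch (z : ℂ) (n : ℕ) : ℂ := (ascPochhammer ℂ n).eval z

lemma poch_zero (z : ℂ) : poch z 0 = 1 := by simp [poch]

lemma poch_succ (z : ℂ) (n : ℕ) : poch z (n + 1) = poch z n * (z + n) := by
  simp [poch, ascPochhammer_succ_right]

lemma poch_ne_zero {z : ℂ} (h : ∀ m : ℕ, z + (m : ℂ) ≠ 0) (n : ℕ) : poch z n ≠ 0 := by
  induction n with
  | zero => simp [poch_zero]
  | succ n ih => rw [poch_succ]; exact mul_ne_zero ih (h n)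

/-- Coefficient of the ₂F₁ series. -/
noncomputable def cf (a b : ℂ) (n : ℕ) : ℂ :=
  poch a n * poch b n / (poch (a + b + 1 / 2) n * (n.factorial : ℂ))

/-- WZ certificate multiplier (polynomial form). -/
noncomputable def rho (a b : ℂ) (k j : ℕ) : ℂ :=
  (j : ℂ) * (4 * (j : ℂ) ^ 2 - 6 * ((k : ℂ) + 1) * (j : ℂ)
      - (2 * (a + b) - 1) * (2 * (a + b) + 3 * (k : ℂ) + 2)) / 2

lemma cf_zero (a b : ℂ) : cf a b 0 = 1 := by simp [cf, poch_zero]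

lemma cf_succ (a b : ℂ)
    (h1 : ∀ m : ℕ, a + b + 1 / 2 + (m : ℂ) ≠ 0) (n : ℕ) :
    cf a b (n + 1) = cf a b n * ((a + n) * (b + n) / ((a + b + 1 / 2 + (n : ℂ)) * ((n : ℂ) + 1))) := by
  have hc : poch (a + b + 1 / 2) n ≠ 0 := poch_ne_zero h1 n
  have hcn : a + b + 1 / 2 + (n : ℂ) ≠ 0 := h1 n
  have hf : (n.factorial : ℂ) ≠ 0 := Nat.cast_ne_zero.mpr n.factorial_ne_zero
  have hn1 : (n : ℂ) + 1 ≠ 0 := Nat.cast_add_one_ne_zero n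
  simp only [cf, poch_succ, Nat.factorial_succ]
  push_cast
  field_simp

lemma rho_top (a b : ℂ) (k : ℕ) :
    rho a b k (k + 1) = -((a + b + 1 / 2 + (k : ℂ)) * (2 * a + 2 * b + (k : ℂ)) * ((k : ℂ) + 1)) := by
  simp only [rho]
  push_cast
  ring

set_option maxHeartbeats 1000000 in
lemma scalar (a b c x y : ℂ) (hrel : c = a + b + 1 / 2)
    (hc1 : c + x ≠ 0) (hc2 : c + y ≠ 0)
    (hj1 : x + 1 ≠ 0) (hm1 : y + 1 ≠ 0) :
    ((c + (x + y)) * (2 * a + 2 * b + (x + y)) * ((x + y) + 1))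
        * ((a + y) * (b + y) / ((c + y) * (y + 1)))
      - (2 * a + (x + y)) * (2 * b + (x + y)) * (a + b + (x + y))
      = ((x + 1) * (4 * (x + 1) ^ 2 - 6 * ((x + y) + 1) * (x + 1)
          - (2 * (a + b) - 1) * (2 * (a + b) + 3 * (x + y) + 2)) / 2)
          * ((a + x) * (b + x) / ((c + x) * (x + 1)))
        - (x * (4 * x ^ 2 - 6 * ((x + y) + 1) * x
          - (2 * (a + b) - 1) * (2 * (a + b) + 3 * (x + y) + 2)) / 2)
          * ((a + y) * (b + y) / ((c + y) * (y + 1))) := by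
  field_simp
  subst hrel
  ring

set_option maxHeartbeats 1600000 in
lemma perterm (a b : ℂ)
    (h1 : ∀ m : ℕ, a + b + 1 / 2 + (m : ℂ) ≠ 0) (j m : ℕ) :
    ((a + b + 1 / 2 + ((j + m : ℕ) : ℂ)) * (2 * a + 2 * b + ((j + m : ℕ) : ℂ)) * (((j + m : ℕ) : ℂ) + 1))
        * (cf a b j * cf a b (m + 1))
      - ((2 * a + ((j + m : ℕ) : ℂ)) * (2 * b + ((j + m : ℕ) : ℂ)) * (a + b + ((j + m : ℕ) : ℂ)))
        * (cf a b j * cf a b m)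
      = rho a b (j + m) (j + 1) * (cf a b (j + 1) * cf a b m)
        - rho a b (j + m) j * (cf a b j * cf a b (m + 1)) := by
  have hc1 : a + b + 1 / 2 + (j : ℂ) ≠ 0 := h1 j
  have hc2 : a + b + 1 / 2 + (m : ℂ) ≠ 0 := h1 m
  have hj1 : (j : ℂ) + 1 ≠ 0 := Nat.cast_add_one_ne_zero j
  have hm1 : (m : ℂ) + 1 ≠ 0 := Nat.cast_add_one_ne_zero m
  have hs := scalar a b (a + b + 1 / 2) (j : ℂ) (m : ℂ) rfl hc1 hc2 hj1 hm1
  rw [cf_succ a b h1 j, cf_succ a b h1 m]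
  simp only [rho]
  push_cast
  linear_combination (cf a b j * cf a b m) * hs

lemma step (a b : ℂ)
    (h1 : ∀ m : ℕ, a + b + 1 / 2 + (m : ℂ) ≠ 0) (k : ℕ) :
    ((a + b + 1 / 2 + (k : ℂ)) * (2 * a + 2 * b + (k : ℂ)) * ((k : ℂ) + 1))
        * ∑ j ∈ Finset.range (k + 2), cf a b j * cf a b (k + 1 - j)
      = ((2 * a + (k : ℂ)) * (2 * b + (k : ℂ)) * (a + b + (k : ℂ)))
        * ∑ j ∈ Finset.range (k + 1), cf a b j * cf a b (k - j) := by
  set D : ℂ := (a + b + 1 / 2 + (k : ℂ)) * (2 * a + 2 * b + (k : ℂ)) * ((k : ℂ) + 1) with hD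
  set N : ℂ := (2 * a + (k : ℂ)) * (2 * b + (k : ℂ)) * (a + b + (k : ℂ)) with hN
  set g : ℕ → ℂ := fun j => rho a b k j * (cf a b j * cf a b (k + 1 - j)) with hg
  have key : ∀ j ∈ Finset.range (k + 1),
      D * (cf a b j * cf a b (k + 1 - j)) - N * (cf a b j * cf a b (k - j)) = g (j + 1) - g j := by
    intro j hj
    rw [Finset.mem_range] at hj
    obtain ⟨m, rfl⟩ : ∃ m, k = j + m := ⟨k - j, by omega⟩
    have e1 : j + m + 1 - j = m + 1 := by omega
    have e2 : j + m - j = m := by omega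
    have e3 : j + m + 1 - (j + 1) = m := by omega
    simp only [hg, hD, hN, e1, e2, e3]
    exact perterm a b h1 j m
  have tele : ∑ j ∈ Finset.range (k + 1), (g (j + 1) - g j) = g (k + 1) - g 0 :=
    Finset.sum_range_sub g (k + 1)
  have hg0 : g 0 = 0 := by simp [hg, rho]
  have hgtop : g (k + 1) = -D * cf a b (k + 1) := by
    simp only [hg, Nat.sub_self, rho_top, cf_zero, hD]
    ring
  have hmain : ∑ j ∈ Finset.range (k + 1),
      (D * (cf a b j * cf a b (k + 1 - j)) - N * (cf a b j * cf a b (k - j)))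
        = -D * cf a b (k + 1) := by
    rw [Finset.sum_congr rfl key, tele, hg0, hgtop]; ring
  rw [Finset.sum_sub_distrib, ← Finset.mul_sum, ← Finset.mul_sum] at hmain
  have hsplit : ∑ j ∈ Finset.range (k + 2), cf a b j * cf a b (k + 1 - j)
      = (∑ j ∈ Finset.range (k + 1), cf a b j * cf a b (k + 1 - j)) + cf a b (k + 1) := by
    rw [Finset.sum_range_succ, Nat.sub_self, cf_zero, mul_one]
  rw [hsplit]
  linear_combination hmain

theorem stmt_3 (a b : ℂ)
    (h1 : ∀ m : ℕ, a + b + 1 / 2 + (m : ℂ) ≠ 0)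
    (h2 : ∀ m : ℕ, 2 * a + 2 * b + (m : ℂ) ≠ 0) (k : ℕ) :
    ∑ j ∈ Finset.range (k + 1),
      (poch a j * poch b j / (poch (a + b + 1 / 2) j * (j.factorial : ℂ))) *
        (poch a (k - j) * poch b (k - j) /
          (poch (a + b + 1 / 2) (k - j) * ((k - j).factorial : ℂ)))
      = poch (2 * a) k * poch (2 * b) k * poch (a + b) k /
          (poch (a + b + 1 / 2) k * poch (2 * a + 2 * b) k * (k.factorial : ℂ)) := by
  have hform : ∀ n : ℕ, ∑ j ∈ Finset.range (n + 1),
      (poch a j * poch b j / (poch (a + b + 1 / 2) j * (j.factorial : ℂ))) *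
        (poch a (n - j) * poch b (n - j) /
          (poch (a + b + 1 / 2) (n - j) * ((n - j).factorial : ℂ)))
      = ∑ j ∈ Finset.range (n + 1), cf a b j * cf a b (n - j) := fun n => rfl
  rw [hform]
  induction k with
  | zero => simp [cf_zero, poch_zero]
  | succ k ih =>
    have hstep := step a b h1 k
    rw [ih] at hstep
    have hcK : poch (a + b + 1 / 2) k ≠ 0 := poch_ne_zero h1 k
    have hsK : poch (2 * a + 2 * b) k ≠ 0 := poch_ne_zero h2 k
    have hck : a + b + 1 / 2 + (k : ℂ) ≠ 0 := h1 k
    have h2k : 2 * a + 2 * b + (k : ℂ) ≠ 0 := h2 k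
    have hk1 : (k : ℂ) + 1 ≠ 0 := Nat.cast_add_one_ne_zero k
    have hfk : (k.factorial : ℂ) ≠ 0 := Nat.cast_ne_zero.mpr k.factorial_ne_zero
    have hD : (a + b + 1 / 2 + (k : ℂ)) * (2 * a + 2 * b + (k : ℂ)) * ((k : ℂ) + 1) ≠ 0 :=
      mul_ne_zero (mul_ne_zero hck h2k) hk1
    have hgoal : ∑ j ∈ Finset.range (k + 1 + 1), cf a b j * cf a b (k + 1 - j)
        = (2 * a + (k : ℂ)) * (2 * b + (k : ℂ)) * (a + b + (k : ℂ)) *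
            (poch (2 * a) k * poch (2 * b) k * poch (a + b) k /
              (poch (a + b + 1 / 2) k * poch (2 * a + 2 * b) k * (k.factorial : ℂ))) /
            ((a + b + 1 / 2 + (k : ℂ)) * (2 * a + 2 * b + (k : ℂ)) * ((k : ℂ) + 1)) := by
      rw [eq_div_iff hD]
      linear_combination hstep
    rw [hgoal, poch_succ (2 * a), poch_succ (2 * b), poch_succ (a + b),
      poch_succ (a + b + 1 / 2), poch_succ (2 * a + 2 * b), Nat.factorial_succ]
    push_cast
    rw [mul_div_assoc', div_div, div_eq_div_iff (mul_ne_zero (mul_ne_zero (mul_ne_zero hcK hsK) hfk) hD)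
      (mul_ne_zero (mul_ne_zero (mul_ne_zero hcK hck) (mul_ne_zero hsK h2k)) (mul_ne_zero hk1 hfk))]
    ring
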